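/- Let n ≥ 1, let J be the standard 2n×2n symplectic matrix, let A be a real 2n×2n matrix, and let N be a real symmetric 2n×2n matrix such that the complex Hermitian matrix N + i·(AᵀJ + JA) is positive semidefinite. Define M_t = ∫_0^t (exp(τA))ᵀ · N · exp(τA) dτ for t ≥ 0. Then for every t ≥ 0 the complex Hermitian matrix M_t + i·(J − (exp(tA))ᵀ J exp(tA)) is positive semidefinite, and likewise M_t − i·(J − (exp(tA))ᵀ J exp(tA)) is positive semidefinite. -/

import Mathlib

noncomputable section
open Matrix
open scoped ComplexOrder

/-- The standard `2n × 2n` symplectic matrix: block diagonal with `n` copies of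
the block `((0,1),(-1,0))`. -/
def sympJ (n : ℕ) : Matrix (Fin (2*n)) (Fin (2*n)) ℝ :=
  Matrix.of fun j k =>
    if j.val % 2 = 0 ∧ k.val = j.val + 1 then 1
    else if k.val % 2 = 0 ∧ j.val = k.val + 1 then -1 else 0
/-- `Mmat d A N t = ∫_0^t (exp(τA))ᵀ · N · exp(τA) dτ` (entrywise integral). -/
def Mmat (d : ℕ) (A N : Matrix (Fin d) (Fin d) ℝ) (t : ℝ) : Matrix (Fin d) (Fin d) ℝ :=
  Matrix.of fun i j =>
    ∫ τ in (0:ℝ)..t, ((NormedSpace.exp (τ • A))ᵀ * N * NormedSpace.exp (τ • A)) i j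

lemma entry_hasDerivAt (d : ℕ) (A B : Matrix (Fin d) (Fin d) ℝ) (i j : Fin d) (t : ℝ) :
    HasDerivAt (fun τ : ℝ => ((NormedSpace.exp (τ • A))ᵀ * B * NormedSpace.exp (τ • A)) i j)
      (((NormedSpace.exp (t • A))ᵀ * (Aᵀ * B + B * A) * NormedSpace.exp (t • A)) i j) t := by
  letI : NormedRing (Matrix (Fin d) (Fin d) ℝ) := Matrix.linftyOpNormedRing
  letI : NormedAlgebra ℝ (Matrix (Fin d) (Fin d) ℝ) := Matrix.linftyOpNormedAlgebra
  have hE : HasDerivAt (fun τ : ℝ => NormedSpace.exp (τ • A))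
      (A * NormedSpace.exp (t • A)) t := hasDerivAt_exp_smul_const' A t
  have hT : HasDerivAt (fun τ : ℝ => (NormedSpace.exp (τ • A))ᵀ)
      ((NormedSpace.exp (t • A))ᵀ * Aᵀ) t := by
    have h := hasDerivAt_exp_smul_const (𝕂 := ℝ) Aᵀ t
    have hrw : ∀ τ : ℝ, NormedSpace.exp (τ • Aᵀ) = (NormedSpace.exp (τ • A))ᵀ := by
      intro τ
      rw [← Matrix.transpose_smul, Matrix.exp_transpose]
    rw [show (fun τ : ℝ => (NormedSpace.exp (τ • A))ᵀ) = fun u => NormedSpace.exp (u • Aᵀ) from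
      funext fun τ => (hrw τ).symm, ← hrw t]
    exact h
  have hM : HasDerivAt
      (fun τ : ℝ => (NormedSpace.exp (τ • A))ᵀ * B * NormedSpace.exp (τ • A))
      ((NormedSpace.exp (t • A))ᵀ * (Aᵀ * B + B * A) * NormedSpace.exp (t • A)) t := by
    have := (hT.mul_const B).mul hE
    exact this.congr_deriv (by noncomm_ring)
  have hL : Continuous (fun M : Matrix (Fin d) (Fin d) ℝ => M i j) := by
    have : (fun M : Matrix (Fin d) (Fin d) ℝ => M i j) =
      (LinearMap.proj (R := ℝ) (φ := fun _ : Fin d => ℝ) j ∘ₗ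
        LinearMap.proj (R := ℝ) (φ := fun _ : Fin d => Fin d → ℝ) i) := rfl
    exact (continuous_apply j).comp (continuous_apply i)
  let L : Matrix (Fin d) (Fin d) ℝ →L[ℝ] ℝ :=
    { toLinearMap := (LinearMap.proj (R := ℝ) (φ := fun _ : Fin d => ℝ) j ∘ₗ
        LinearMap.proj (R := ℝ) (φ := fun _ : Fin d => Fin d → ℝ) i), cont := hL }
  have := L.hasFDerivAt.comp_hasDerivAt t hM
  exact this

lemma entry_cont (d : ℕ) (A B : Matrix (Fin d) (Fin d) ℝ) (i j : Fin d) :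
    Continuous (fun τ : ℝ => ((NormedSpace.exp (τ • A))ᵀ * B * NormedSpace.exp (τ • A)) i j) := by
  rw [continuous_iff_continuousAt]
  exact fun τ => (entry_hasDerivAt d A B i j τ).continuousAt

lemma entry_int (d : ℕ) (A B : Matrix (Fin d) (Fin d) ℝ) (i j : Fin d) (t : ℝ) :
    ∫ τ in (0:ℝ)..t,
        ((NormedSpace.exp (τ • A))ᵀ * (Aᵀ * B + B * A) * NormedSpace.exp (τ • A)) i j
      = ((NormedSpace.exp (t • A))ᵀ * B * NormedSpace.exp (t • A)) i j - B i j := by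
  have h := intervalIntegral.integral_eq_sub_of_hasDerivAt
    (f := fun τ : ℝ => ((NormedSpace.exp (τ • A))ᵀ * B * NormedSpace.exp (τ • A)) i j)
    (fun τ _ => entry_hasDerivAt d A B i j τ)
    ((entry_cont d A (Aᵀ * B + B * A) i j).intervalIntegrable 0 t)
  rw [h]
  simp [NormedSpace.exp_zero]

lemma map_conjT (d : ℕ) (X : Matrix (Fin d) (Fin d) ℝ) :
    (X.map Complex.ofReal)ᴴ = Xᵀ.map Complex.ofReal := by
  ext i j
  simp [conjTranspose_apply, Matrix.map_apply, Complex.conj_ofReal]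

lemma map_transR (d : ℕ) (X : Matrix (Fin d) (Fin d) ℝ) :
    (X.map Complex.ofReal)ᵀ = Xᵀ.map Complex.ofReal := by
  ext i j
  simp [Matrix.transpose_apply, Matrix.map_apply]

lemma map_mulR (d : ℕ) (X Y : Matrix (Fin d) (Fin d) ℝ) :
    (X * Y).map Complex.ofReal = X.map Complex.ofReal * Y.map Complex.ofReal := by
  ext i j
  simp [Matrix.map_apply, Matrix.mul_apply]

lemma map_negR (d : ℕ) (X : Matrix (Fin d) (Fin d) ℝ) :
    (-X).map Complex.ofReal = -(X.map Complex.ofReal) := by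
  ext i j
  simp [Matrix.map_apply]

lemma main_aux (d : ℕ) (A N S K : Matrix (Fin d) (Fin d) ℝ)
    (hNsymm : Nᵀ = N) (hSskew : Sᵀ = -S) (t : ℝ) (ht : 0 ≤ t)
    (hK : ∀ i j, K i j =
      -(∫ τ in (0:ℝ)..t, ((NormedSpace.exp (τ • A))ᵀ * S * NormedSpace.exp (τ • A)) i j))
    (hPSD : (N.map Complex.ofReal - Complex.I • S.map Complex.ofReal).PosSemidef) :
    ((Mmat d A N t).map Complex.ofReal + Complex.I • K.map Complex.ofReal).PosSemidef := by
  set E : ℝ → Matrix (Fin d) (Fin d) ℝ := fun τ => NormedSpace.exp (τ • A) with hE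
  have hEN : ∀ τ, ((E τ)ᵀ * N * E τ)ᵀ = (E τ)ᵀ * N * E τ := by
    intro τ
    rw [Matrix.transpose_mul, Matrix.transpose_mul, Matrix.transpose_transpose, hNsymm,
      ← Matrix.mul_assoc]
  have hES : ∀ τ, ((E τ)ᵀ * S * E τ)ᵀ = -((E τ)ᵀ * S * E τ) := by
    intro τ
    rw [Matrix.transpose_mul, Matrix.transpose_mul, Matrix.transpose_transpose, hSskew]
    simp [Matrix.neg_mul, Matrix.mul_neg, Matrix.mul_assoc]
  have Msymm : (Mmat d A N t)ᵀ = Mmat d A N t := by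
    ext i j
    show Mmat d A N t j i = Mmat d A N t i j
    simp only [Mmat, Matrix.of_apply]
    refine intervalIntegral.integral_congr fun τ _ => ?_
    rw [← Matrix.transpose_apply ((E τ)ᵀ * N * E τ) i j, hEN]
  have Kskew : Kᵀ = -K := by
    ext i j
    show K j i = -K i j
    rw [hK j i, hK i j, neg_neg, ← intervalIntegral.integral_neg]
    refine intervalIntegral.integral_congr fun τ _ => ?_
    rw [← Matrix.transpose_apply ((E τ)ᵀ * S * E τ) i j, hES, Matrix.neg_apply, neg_neg]
  refine Matrix.PosSemidef.of_dotProduct_mulVec_nonneg ?_ ?_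
  · show _ = _
    rw [conjTranspose_add, conjTranspose_smul, map_conjT, map_conjT, Msymm, Kskew, map_negR]
    simp [Complex.star_def, Complex.conj_I]
  · intro x
    set Cc : Matrix (Fin d) (Fin d) ℂ :=
      N.map Complex.ofReal - Complex.I • S.map Complex.ofReal with hCc
    set P : ℝ → Matrix (Fin d) (Fin d) ℂ :=
      fun τ => ((E τ).map Complex.ofReal)ᴴ * Cc * ((E τ).map Complex.ofReal) with hP
    have hPτ : ∀ τ, (P τ).PosSemidef := fun τ => hPSD.conjTranspose_mul_mul_same _
    have hPeq : ∀ τ, P τ = ((E τ)ᵀ * N * E τ).map Complex.ofReal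
        - Complex.I • ((E τ)ᵀ * S * E τ).map Complex.ofReal := by
      intro τ
      show ((E τ).map Complex.ofReal)ᴴ * (N.map Complex.ofReal - Complex.I • S.map Complex.ofReal)
          * (E τ).map Complex.ofReal = _
      rw [map_conjT, map_mulR, map_mulR, map_mulR, map_mulR]
      simp [Matrix.mul_sub, Matrix.sub_mul, Matrix.mul_smul, Matrix.smul_mul]
    have hPentry : ∀ (τ : ℝ) i j, P τ i j =
        ((((E τ)ᵀ * N * E τ) i j : ℝ) : ℂ) - Complex.I * ((((E τ)ᵀ * S * E τ) i j : ℝ) : ℂ) := by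
      intro τ i j
      rw [hPeq τ]
      simp [Matrix.sub_apply, Matrix.smul_apply, Matrix.map_apply, smul_eq_mul]
    have hPc : ∀ i j, Continuous fun τ => P τ i j := by
      intro i j
      simp only [hPentry]
      exact (Complex.continuous_ofReal.comp (entry_cont d A N i j)).sub
        (continuous_const.mul (Complex.continuous_ofReal.comp (entry_cont d A S i j)))
    have hBij : ∀ i j,
        ((Mmat d A N t).map Complex.ofReal + Complex.I • K.map Complex.ofReal) i j
          = ∫ τ in (0:ℝ)..t, P τ i j := by
      intro i j
      have hgc : IntervalIntegrable (fun τ => ((((E τ)ᵀ * N * E τ) i j : ℝ) : ℂ))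
          MeasureTheory.volume 0 t :=
        (Complex.continuous_ofReal.comp (entry_cont d A N i j)).intervalIntegrable 0 t
      have hsc : IntervalIntegrable (fun τ => Complex.I * ((((E τ)ᵀ * S * E τ) i j : ℝ) : ℂ))
          MeasureTheory.volume 0 t :=
        (continuous_const.mul
          (Complex.continuous_ofReal.comp (entry_cont d A S i j))).intervalIntegrable 0 t
      have : (∫ τ in (0:ℝ)..t, P τ i j)
          = (∫ τ in (0:ℝ)..t, ((((E τ)ᵀ * N * E τ) i j : ℝ) : ℂ))
            - ∫ τ in (0:ℝ)..t, Complex.I * ((((E τ)ᵀ * S * E τ) i j : ℝ) : ℂ) := by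
        rw [← intervalIntegral.integral_sub hgc hsc]
        refine intervalIntegral.integral_congr fun τ _ => hPentry τ i j
      rw [this, intervalIntegral.integral_const_mul, intervalIntegral.integral_ofReal,
        intervalIntegral.integral_ofReal]
      simp only [Matrix.add_apply, Matrix.smul_apply, Matrix.map_apply, Mmat, Matrix.of_apply,
        hK i j, smul_eq_mul]
      push_cast
      ring
    have expand : ∀ B : Matrix (Fin d) (Fin d) ℂ,
        star x ⬝ᵥ (B *ᵥ x) = ∑ i, ∑ j, star (x i) * B i j * x j := by
      intro B
      simp [dotProduct, Matrix.mulVec, Finset.mul_sum, mul_assoc]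
    have hint : ∀ (i j : Fin d), IntervalIntegrable (fun τ => star (x i) * P τ i j * x j)
        MeasureTheory.volume 0 t :=
      fun i j => ((continuous_const.mul (hPc i j)).mul continuous_const).intervalIntegrable 0 t
    have key : star x ⬝ᵥ
        (((Mmat d A N t).map Complex.ofReal + Complex.I • K.map Complex.ofReal) *ᵥ x)
        = ∫ τ in (0:ℝ)..t, star x ⬝ᵥ (P τ *ᵥ x) := by
      rw [expand]
      have h1 : ∀ i j : Fin d,
          star (x i) * ((Mmat d A N t).map Complex.ofReal + Complex.I • K.map Complex.ofReal) i j
            * x j = ∫ τ in (0:ℝ)..t, star (x i) * P τ i j * x j := by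
        intro i j
        rw [hBij i j, ← intervalIntegral.integral_const_mul, ← intervalIntegral.integral_mul_const]
      calc (∑ i, ∑ j, star (x i)
            * ((Mmat d A N t).map Complex.ofReal + Complex.I • K.map Complex.ofReal) i j * x j)
          = ∑ i, ∑ j, ∫ τ in (0:ℝ)..t, star (x i) * P τ i j * x j := by
            exact Finset.sum_congr rfl fun i _ => Finset.sum_congr rfl fun j _ => h1 i j
        _ = ∑ i : Fin d, ∫ τ in (0:ℝ)..t, ∑ j, star (x i) * P τ i j * x j := by
            refine Finset.sum_congr rfl fun i _ => ?_
            rw [intervalIntegral.integral_finset_sum fun j _ => hint i j]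
        _ = ∫ τ in (0:ℝ)..t, ∑ i, ∑ j, star (x i) * P τ i j * x j := by
            exact (intervalIntegral.integral_finset_sum fun i _ =>
              ((continuous_finset_sum Finset.univ fun j _ =>
                (continuous_const.mul (hPc i j)).mul continuous_const).intervalIntegrable
                  0 t)).symm
        _ = ∫ τ in (0:ℝ)..t, star x ⬝ᵥ (P τ *ᵥ x) :=
            intervalIntegral.integral_congr fun τ _ => (expand (P τ)).symm
    rw [key]
    have hq : ∀ τ, 0 ≤ star x ⬝ᵥ (P τ *ᵥ x) := fun τ => (hPτ τ).dotProduct_mulVec_nonneg x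
    have him : ∀ τ : ℝ, star x ⬝ᵥ (P τ *ᵥ x) = (((star x ⬝ᵥ (P τ *ᵥ x)).re : ℝ) : ℂ) := by
      intro τ
      have h := hq τ
      rw [Complex.nonneg_iff] at h
      exact Complex.ext rfl (by simp [h.2])
    rw [intervalIntegral.integral_congr fun τ _ => him τ, intervalIntegral.integral_ofReal]
    refine Complex.zero_le_real.2 (intervalIntegral.integral_nonneg ht fun u _ => ?_)
    exact (Complex.nonneg_iff.mp (hq u)).1

lemma sympJ_transpose (n : ℕ) : (sympJ n)ᵀ = -(sympJ n) := by
  ext j k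
  simp only [Matrix.transpose_apply, Matrix.neg_apply, sympJ, Matrix.of_apply]
  split_ifs with h1 h2
  · exact absurd (h1.2.trans (by rw [h2.2])) (by omega)
  · norm_num
  · norm_num
  · norm_num

/-- If `N + i(AᵀJ + JA)` is positive semidefinite then for every `t ≥ 0` both
`M_t + i(J - (exp(tA))ᵀ J exp(tA))` and `M_t - i(J - (exp(tA))ᵀ J exp(tA))` are
positive semidefinite, where `M_t = ∫_0^t (exp(τA))ᵀ N exp(τA) dτ`. -/
theorem integrated_condition (n : ℕ) (hn : 1 ≤ n)
    (A N : Matrix (Fin (2*n)) (Fin (2*n)) ℝ) (hNsymm : Nᵀ = N)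
    (hN : (N.map Complex.ofReal +
      Complex.I • ((Aᵀ * sympJ n + sympJ n * A).map Complex.ofReal)).PosSemidef) :
    ∀ t : ℝ, 0 ≤ t →
      ((Mmat (2*n) A N t).map Complex.ofReal +
        Complex.I • ((sympJ n -
          (NormedSpace.exp (t • A))ᵀ * sympJ n * NormedSpace.exp (t • A)).map
            Complex.ofReal)).PosSemidef ∧
      ((Mmat (2*n) A N t).map Complex.ofReal -
        Complex.I • ((sympJ n -
          (NormedSpace.exp (t • A))ᵀ * sympJ n * NormedSpace.exp (t • A)).map
            Complex.ofReal)).PosSemidef := by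
  intro t ht
  have hS0 : (Aᵀ * sympJ n + sympJ n * A)ᵀ = -(Aᵀ * sympJ n + sympJ n * A) := by
    rw [Matrix.transpose_add, Matrix.transpose_mul, Matrix.transpose_mul,
      Matrix.transpose_transpose, sympJ_transpose, Matrix.neg_mul, Matrix.mul_neg]
    abel
  have hK1 : ∀ i j : Fin (2*n),
      (sympJ n - (NormedSpace.exp (t • A))ᵀ * sympJ n * NormedSpace.exp (t • A)) i j =
      -(∫ τ in (0:ℝ)..t, ((NormedSpace.exp (τ • A))ᵀ *
          (Aᵀ * sympJ n + sympJ n * A) * NormedSpace.exp (τ • A)) i j) := by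
    intro i j
    rw [Matrix.sub_apply, entry_int (2*n) A (sympJ n) i j t]
    ring
  constructor
  · refine main_aux (2*n) A N (Aᵀ * sympJ n + sympJ n * A) _ hNsymm hS0 t ht hK1 ?_
    have h2 := hN.transpose
    have heq : (N.map Complex.ofReal -
        Complex.I • ((Aᵀ * sympJ n + sympJ n * A).map Complex.ofReal)) =
        (N.map Complex.ofReal +
          Complex.I • ((Aᵀ * sympJ n + sympJ n * A).map Complex.ofReal))ᵀ := by
      rw [Matrix.transpose_add, Matrix.transpose_smul, map_transR, map_transR, hNsymm, hS0,
        map_negR, smul_neg, ← sub_eq_add_neg]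
    rw [heq]
    exact h2
  · have hK1' : ∀ i j : Fin (2*n),
        (-(sympJ n - (NormedSpace.exp (t • A))ᵀ * sympJ n * NormedSpace.exp (t • A))) i j =
        -(∫ τ in (0:ℝ)..t, ((NormedSpace.exp (τ • A))ᵀ *
            (-(Aᵀ * sympJ n + sympJ n * A)) * NormedSpace.exp (τ • A)) i j) := by
      intro i j
      rw [Matrix.neg_apply, hK1 i j, neg_neg, ← intervalIntegral.integral_neg]
      refine intervalIntegral.integral_congr fun τ _ => ?_
      rw [Matrix.mul_neg, Matrix.neg_mul, Matrix.neg_apply, neg_neg]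
    have hS0' : (-(Aᵀ * sympJ n + sympJ n * A))ᵀ = -(-(Aᵀ * sympJ n + sympJ n * A)) := by
      rw [Matrix.transpose_neg, hS0]
    have hPSD2 : (N.map Complex.ofReal -
        Complex.I • ((-(Aᵀ * sympJ n + sympJ n * A)).map Complex.ofReal)).PosSemidef := by
      rw [map_negR, smul_neg, sub_neg_eq_add]
      exact hN
    have h := main_aux (2*n) A N (-(Aᵀ * sympJ n + sympJ n * A))
      (-(sympJ n - (NormedSpace.exp (t • A))ᵀ * sympJ n * NormedSpace.exp (t • A)))
      hNsymm hS0' t ht hK1' hPSD2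
    rw [map_negR, smul_neg, ← sub_eq_add_neg] at h
    exact h
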